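/- Let n ≥ 1 and let I be the ideal of the polynomial ring ℤ[x₁, x₂] generated by x₁^{2n} − 1 and x₂² − x₁x₂ − x₂. Then the quotient ring ℤ[x₁, x₂]/I is a free ℤ-module of rank 4n, and the images of the 4n monomials x₁^i (0 ≤ i ≤ 2n−1) and x₁^i x₂ (0 ≤ i ≤ 2n−1) form a ℤ-basis of it. -/

import Mathlib

open MvPolynomial

/-- The ideal `I = (x₁^{2n} - 1, x₂² - x₁x₂ - x₂)` of `ℤ[x₁, x₂]`. -/
noncomputable def greenIdeal (n : ℕ) : Ideal (MvPolynomial (Fin 2) ℤ) :=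
  Ideal.span {(X 0 : MvPolynomial (Fin 2) ℤ) ^ (2 * n) - 1,
    (X 1 : MvPolynomial (Fin 2) ℤ) ^ 2 - X 0 * X 1 - X 1}

namespace Stmt7

noncomputable def pA (n : ℕ) : Polynomial ℤ := Polynomial.X ^ (2 * n) - 1

noncomputable abbrev A (n : ℕ) := AdjoinRoot (pA n)

noncomputable def qB (n : ℕ) : Polynomial (A n) :=
  Polynomial.X ^ 2 - Polynomial.C (AdjoinRoot.root (pA n)) * Polynomial.X - Polynomial.X

noncomputable abbrev B (n : ℕ) := AdjoinRoot (qB n)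

noncomputable abbrev Q (n : ℕ) := MvPolynomial (Fin 2) ℤ ⧸ greenIdeal n

lemma mem1 (n : ℕ) : (X 0 : MvPolynomial (Fin 2) ℤ) ^ (2 * n) - 1 ∈ greenIdeal n :=
  Ideal.subset_span (by simp)

lemma mem2 (n : ℕ) :
    (X 1 : MvPolynomial (Fin 2) ℤ) ^ 2 - X 0 * X 1 - X 1 ∈ greenIdeal n :=
  Ideal.subset_span (by simp)

lemma root_pow (n : ℕ) : (AdjoinRoot.root (pA n)) ^ (2 * n) = 1 := by
  have h := AdjoinRoot.mk_self (f := pA n)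
  rw [pA, map_sub, map_pow, AdjoinRoot.mk_X, map_one, sub_eq_zero] at h
  exact h

lemma rootq_sq (n : ℕ) :
    (AdjoinRoot.root (qB n)) ^ 2 =
      AdjoinRoot.of (qB n) (AdjoinRoot.root (pA n)) * AdjoinRoot.root (qB n)
        + AdjoinRoot.root (qB n) := by
  have h : AdjoinRoot.mk (qB n) (Polynomial.X ^ 2
      - Polynomial.C (AdjoinRoot.root (pA n)) * Polynomial.X - Polynomial.X) = 0 := by
    rw [← qB]; exact AdjoinRoot.mk_self
  rw [map_sub, map_sub, map_pow, map_mul, AdjoinRoot.mk_X, AdjoinRoot.mk_C,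
    sub_sub, sub_eq_zero] at h
  rw [h]

lemma monic_pA (n : ℕ) (hn : 1 ≤ n) : (pA n).Monic := by
  have := Polynomial.monic_X_pow_sub_C (1 : ℤ) (n := 2 * n) (by omega)
  simpa [pA] using this

lemma monic_qB (n : ℕ) : (qB n).Monic := by rw [qB]; monicity!

/-- forward map on polynomials -/
noncomputable def φ₀ (n : ℕ) : MvPolynomial (Fin 2) ℤ →+* B n :=
  (MvPolynomial.aeval
    ![AdjoinRoot.of (qB n) (AdjoinRoot.root (pA n)), AdjoinRoot.root (qB n)]).toRingHom

lemma φ₀_X0 (n : ℕ) : φ₀ n (X 0) = AdjoinRoot.of (qB n) (AdjoinRoot.root (pA n)) := by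
  simp [φ₀]

lemma φ₀_X1 (n : ℕ) : φ₀ n (X 1) = AdjoinRoot.root (qB n) := by
  simp [φ₀]

lemma φ₀_ker (n : ℕ) : ∀ x ∈ greenIdeal n, φ₀ n x = 0 := by
  have hle : greenIdeal n ≤ RingHom.ker (φ₀ n) := by
    rw [greenIdeal, Ideal.span_le]
    intro x hx
    simp only [Set.mem_insert_iff, Set.mem_singleton_iff] at hx
    rcases hx with rfl | rfl
    · simp only [SetLike.mem_coe, RingHom.mem_ker, map_sub, map_pow, map_one, φ₀_X0]
      rw [← map_pow, root_pow, map_one, sub_self]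
    · simp only [SetLike.mem_coe, RingHom.mem_ker, map_sub, map_pow, map_mul, φ₀_X0, φ₀_X1]
      rw [rootq_sq]; ring
  intro x hx
  exact hle hx

noncomputable def φ (n : ℕ) : Q n →+* B n :=
  Ideal.Quotient.lift (greenIdeal n) (φ₀ n) (φ₀_ker n)

/-- backward map, first stage -/
noncomputable def ψ₀ (n : ℕ) : A n →+* Q n :=
  AdjoinRoot.lift (algebraMap ℤ (Q n)) (Ideal.Quotient.mk (greenIdeal n) (X 0)) <| by
    rw [pA]
    simp only [Polynomial.eval₂_sub, Polynomial.eval₂_pow, Polynomial.eval₂_X,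
      Polynomial.eval₂_one]
    rw [← map_pow, ← map_one (Ideal.Quotient.mk (greenIdeal n)), ← map_sub]
    exact Ideal.Quotient.eq_zero_iff_mem.mpr (mem1 n)

lemma ψ₀_root (n : ℕ) :
    ψ₀ n (AdjoinRoot.root (pA n)) = Ideal.Quotient.mk (greenIdeal n) (X 0) :=
  AdjoinRoot.lift_root _

noncomputable def ψ (n : ℕ) : B n →+* Q n :=
  AdjoinRoot.lift (ψ₀ n) (Ideal.Quotient.mk (greenIdeal n) (X 1)) <| by
    rw [qB]
    simp only [Polynomial.eval₂_sub, Polynomial.eval₂_pow, Polynomial.eval₂_X,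
      Polynomial.eval₂_mul, Polynomial.eval₂_C, ψ₀_root]
    rw [← map_pow, ← map_mul, ← map_sub, ← map_sub]
    exact Ideal.Quotient.eq_zero_iff_mem.mpr (mem2 n)

lemma ψ_root (n : ℕ) :
    ψ n (AdjoinRoot.root (qB n)) = Ideal.Quotient.mk (greenIdeal n) (X 1) :=
  AdjoinRoot.lift_root _

lemma ψ_of (n : ℕ) (a : A n) : ψ n (AdjoinRoot.of (qB n) a) = ψ₀ n a :=
  AdjoinRoot.lift_of _

lemma adjoinRoot_ringHom_ext {R S : Type*} [CommRing R] [CommRing S] {f : Polynomial R}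
    (g h : AdjoinRoot f →+* S) (H : g.comp (AdjoinRoot.mk f) = h.comp (AdjoinRoot.mk f)) :
    g = h :=
  RingHom.ext fun x => AdjoinRoot.induction_on f x fun p => RingHom.congr_fun H p

lemma ψ_comp_φ (n : ℕ) : (ψ n).comp (φ n) = RingHom.id (Q n) := by
  apply Ideal.Quotient.ringHom_ext
  apply MvPolynomial.ringHom_ext
  · intro r
    rw [eq_intCast (MvPolynomial.C (σ := Fin 2) (R := ℤ)) r]
    simp [map_intCast]
  · intro i
    fin_cases i
    · simp [φ, φ₀_X0, ψ_of, ψ₀_root]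
    · simp [φ, φ₀_X1, ψ_root]

lemma φ_comp_ψ (n : ℕ) : (φ n).comp (ψ n) = RingHom.id (B n) := by
  apply adjoinRoot_ringHom_ext
  apply Polynomial.ringHom_ext'
  · -- on constants A n
    apply adjoinRoot_ringHom_ext
    apply Polynomial.ringHom_ext'
    · exact Subsingleton.elim _ _
    · simp only [RingHom.comp_apply, AdjoinRoot.mk_X, AdjoinRoot.mk_C]
      rw [ψ_of, ψ₀_root]
      simp [φ, φ₀_X0]
  · simp only [RingHom.comp_apply, AdjoinRoot.mk_X]
    simp [ψ_root, φ, φ₀_X1]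

noncomputable def e (n : ℕ) : B n ≃+* Q n :=
  RingEquiv.ofRingHom (ψ n) (φ n) (ψ_comp_φ n) (φ_comp_ψ n)

end Stmt7

namespace Stmt7

lemma e_apply (n : ℕ) (x : B n) : e n x = ψ n x := rfl

instance (n : ℕ) : Nontrivial (A n) := by
  have f : A n →+* ℤ := AdjoinRoot.lift (RingHom.id ℤ) 1 (by simp [pA])
  exact f.domain_nontrivial

lemma natDegree_pA (n : ℕ) : (pA n).natDegree = 2 * n := by
  have : pA n = Polynomial.X ^ (2 * n) - Polynomial.C 1 := by simp [pA]
  rw [this, Polynomial.natDegree_X_pow_sub_C]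

lemma natDegree_qB (n : ℕ) : (qB n).natDegree = 2 := by
  rw [qB]
  compute_degree!

noncomputable def pbA (n : ℕ) (hn : 1 ≤ n) : PowerBasis ℤ (A n) :=
  AdjoinRoot.powerBasis' (monic_pA n hn)

noncomputable def pbB (n : ℕ) : PowerBasis (A n) (B n) :=
  AdjoinRoot.powerBasis' (monic_qB n)

lemma dimA (n : ℕ) (hn : 1 ≤ n) : (pbA n hn).dim = 2 * n := by
  rw [pbA, AdjoinRoot.powerBasis'_dim, natDegree_pA]

lemma dimB (n : ℕ) : (pbB n).dim = 2 := by
  rw [pbB, AdjoinRoot.powerBasis'_dim, natDegree_qB]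

noncomputable def bb (n : ℕ) (hn : 1 ≤ n) : Module.Basis (Fin (2 * n) × Fin 2) ℤ (B n) :=
  ((pbA n hn).basis.smulTower (pbB n).basis).reindex
    (Equiv.prodCongr (finCongr (dimA n hn)) (finCongr (dimB n)))

noncomputable def Bfin (n : ℕ) (hn : 1 ≤ n) : Module.Basis (Fin (2 * n) × Fin 2) ℤ (Q n) :=
  (bb n hn).map (AddEquiv.toIntLinearEquiv (e n).toAddEquiv)

lemma Bfin_apply (n : ℕ) (hn : 1 ≤ n) (p : Fin (2 * n) × Fin 2) :
    Bfin n hn p = Ideal.Quotient.mk (greenIdeal n)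
      ((X 0 : MvPolynomial (Fin 2) ℤ) ^ (p.1 : ℕ) * (X 1 : MvPolynomial (Fin 2) ℤ) ^ (p.2 : ℕ)) := by
  rw [Bfin, Module.Basis.map_apply, bb, Module.Basis.reindex_apply]
  have : (Equiv.prodCongr (finCongr (dimA n hn)) (finCongr (dimB n))).symm p =
      ((finCongr (dimA n hn)).symm p.1, (finCongr (dimB n)).symm p.2) := rfl
  rw [this, Module.Basis.smulTower_apply]
  simp only [PowerBasis.basis_eq_pow]
  simp only [pbA, pbB, AdjoinRoot.powerBasis'_gen, finCongr_symm,
    finCongr_apply, Fin.coe_cast]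
  rw [Algebra.smul_def, AdjoinRoot.algebraMap_eq, map_pow]
  show e n _ = _
  rw [e_apply, map_mul, map_pow, map_pow, ψ_of, ψ₀_root, ψ_root, ← map_pow, ← map_pow, ← map_mul]
  rfl

end Stmt7

/-- `ℤ[x₁,x₂]/I` is a free `ℤ`-module of rank `4n`, and the images of the
monomials `x₁^i` and `x₁^i x₂` (`0 ≤ i ≤ 2n - 1`) form a `ℤ`-basis of it. -/
theorem stmt_7 (n : ℕ) (hn : 1 ≤ n) :
    Module.Free ℤ (MvPolynomial (Fin 2) ℤ ⧸ greenIdeal n) ∧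
    Module.rank ℤ (MvPolynomial (Fin 2) ℤ ⧸ greenIdeal n) = 4 * n ∧
    ∃ B : Module.Basis (Fin (2 * n) × Fin 2) ℤ (MvPolynomial (Fin 2) ℤ ⧸ greenIdeal n),
      ∀ p, B p = Ideal.Quotient.mk (greenIdeal n)
        ((X 0 : MvPolynomial (Fin 2) ℤ) ^ (p.1 : ℕ) * (X 1 : MvPolynomial (Fin 2) ℤ) ^ (p.2 : ℕ)) := by
  refine ⟨Module.Free.of_basis (Stmt7.Bfin n hn), ?_, ⟨Stmt7.Bfin n hn, Stmt7.Bfin_apply n hn⟩⟩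
  rw [rank_eq_card_basis (Stmt7.Bfin n hn)]
  simp only [Fintype.card_prod, Fintype.card_fin]
  push_cast
  ring
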